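/- Let d ≥ 1 and let (u_m)_{m≥0} and (f_k)_{k≥0} be sequences of d×d complex matrices, and let Ω and π be d×d complex matrices. Assume: (i) for every m ≥ 0, Σ_{k=0}^m (u_{m−k} + Ω) f_k = π (a renewal/convolution identity); (ii) Σ_{m≥0} ‖u_m‖ < ∞; and (iii) Σ_{k≥0} (k+1)‖f_k‖ < ∞. Then π = Ω · ( Σ_{k≥0} f_k ) and Ω · ( Σ_{k≥0} k·f_k ) = ( Σ_{m≥0} u_m ) · ( Σ_{k≥0} f_k ). -/
import Mathlib


open Matrix Filter Finset Topology

attribute [local instance] Matrix.normedAddCommGroup Matrix.normedSpace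

set_option maxHeartbeats 1000000

/-- Entrywise sup norm is submultiplicative up to a factor `d`. -/
lemma renewal_norm_mul_le {d : ℕ} (A B : Matrix (Fin d) (Fin d) ℂ) :
    ‖A * B‖ ≤ (d : ℝ) * ‖A‖ * ‖B‖ := by
  refine (Matrix.norm_le_iff (by positivity)).2 fun i j => ?_
  calc ‖(A * B) i j‖ = ‖∑ k, A i k * B k j‖ := by rw [Matrix.mul_apply]
    _ ≤ ∑ k, ‖A i k * B k j‖ := norm_sum_le _ _
    _ ≤ ∑ _k : Fin d, ‖A‖ * ‖B‖ := by
        refine Finset.sum_le_sum fun k _ => ?_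
        calc ‖A i k * B k j‖ ≤ ‖A i k‖ * ‖B k j‖ := norm_mul_le _ _
          _ ≤ ‖A‖ * ‖B‖ :=
            mul_le_mul (Matrix.norm_entry_le_entrywise_sup_norm A)
              (Matrix.norm_entry_le_entrywise_sup_norm B) (norm_nonneg _) (norm_nonneg _)
    _ = (d : ℝ) * ‖A‖ * ‖B‖ := by
        simp [Finset.sum_const, mul_assoc]

/-- Reindexing a triangular double sum as a sum over a triangle of pairs. -/
lemma renewal_triangle_sum {M : Type*} [AddCommMonoid M] (h : ℕ → ℕ → M) (N : ℕ) :
    ∑ m ∈ Finset.range N, ∑ k ∈ Finset.range (m + 1), h (m - k) k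
      = ∑ p ∈ (Finset.range N ×ˢ Finset.range N).filter (fun p => p.1 + p.2 < N),
          h p.1 p.2 := by
  rw [Finset.sum_sigma']
  refine Finset.sum_nbij' (fun σ => (σ.1 - σ.2, σ.2)) (fun p => ⟨p.1 + p.2, p.2⟩)
    ?_ ?_ ?_ ?_ ?_
  · rintro ⟨m, k⟩ hmk
    simp only [Finset.mem_sigma, Finset.mem_range] at hmk
    simp only [Finset.mem_filter, Finset.mem_product, Finset.mem_range]
    omega
  · rintro ⟨a, b⟩ hab
    simp only [Finset.mem_filter, Finset.mem_product, Finset.mem_range] at hab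
    simp only [Finset.mem_sigma, Finset.mem_range]
    omega
  · rintro ⟨m, k⟩ hmk
    simp only [Finset.mem_sigma, Finset.mem_range] at hmk
    have : m - k + k = m := by omega
    simp [this]
  · rintro ⟨a, b⟩ _
    simp
  · rintro ⟨m, k⟩ _
    rfl

/-- The partial double sum `∑_{m<N} ∑_{k≤m} f k` rewritten. -/
lemma renewal_double_sum {M : Type*} [AddCommGroup M] [Module ℂ M] (f : ℕ → M) (N : ℕ) :
    ∑ m ∈ Finset.range N, ∑ k ∈ Finset.range (m + 1), f k
      = (N : ℂ) • (∑ k ∈ Finset.range N, f k) - ∑ k ∈ Finset.range N, (k : ℂ) • f k := by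
  induction N with
  | zero => simp
  | succ n ih =>
    rw [Finset.sum_range_succ, ih, Finset.sum_range_succ (f := fun k => (k : ℂ) • f k),
      Finset.sum_range_succ (f := f)]
    push_cast
    module

/-- analytic core of the second mean hitting time formula: if
`Σ_{k=0}^m (u_{m−k} + Ω) f_k = π` for all `m`, `Σ ‖u_m‖ < ∞` and `Σ (k+1)‖f_k‖ < ∞`,
then `π = Ω (Σ_k f_k)` and `Ω (Σ_k k f_k) = (Σ_m u_m)(Σ_k f_k)`. -/
theorem renewal_derivative_identity {d : ℕ} (hd : 1 ≤ d)
    (u f : ℕ → Matrix (Fin d) (Fin d) ℂ)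
    (Ω π : Matrix (Fin d) (Fin d) ℂ)
    (hconv : ∀ m : ℕ, ∑ k ∈ Finset.range (m + 1), (u (m - k) + Ω) * f k = π)
    (hu : Summable fun m : ℕ => ‖u m‖)
    (hf : Summable fun k : ℕ => ((k : ℝ) + 1) * ‖f k‖) :
    π = Ω * (∑' k : ℕ, f k) ∧
      Ω * (∑' k : ℕ, (k : ℂ) • f k) = (∑' m : ℕ, u m) * (∑' k : ℕ, f k) := by
  classical
  -- basic summability facts
  have hfn : Summable fun k : ℕ => ‖f k‖ := by
    refine Summable.of_nonneg_of_le (fun k => norm_nonneg _) (fun k => ?_) hf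
    nlinarith [norm_nonneg (f k), Nat.cast_nonneg (α := ℝ) k]
  have hfs : Summable f := hfn.of_norm
  have hus : Summable u := hu.of_norm
  have hgn : Summable fun k : ℕ => ‖(k : ℂ) • f k‖ := by
    refine Summable.of_nonneg_of_le (fun k => norm_nonneg _) (fun k => ?_) hf
    rw [norm_smul, Complex.norm_natCast]
    nlinarith [norm_nonneg (f k), Nat.cast_nonneg (α := ℝ) k]
  have hgs : Summable fun k : ℕ => (k : ℂ) • f k := hgn.of_norm
  set F : Matrix (Fin d) (Fin d) ℂ := ∑' k : ℕ, f k with hF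
  set U : Matrix (Fin d) (Fin d) ℂ := ∑' m : ℕ, u m with hU
  set G : Matrix (Fin d) (Fin d) ℂ := ∑' k : ℕ, (k : ℂ) • f k with hG
  -- summability of the product family
  have hprod : Summable (fun p : ℕ × ℕ => u p.1 * f p.2) := by
    apply Summable.of_norm
    refine Summable.of_nonneg_of_le (fun p => norm_nonneg _)
      (fun p => ?_) (((hu.mul_left (d : ℝ)).mul_of_nonneg hfn
        (fun m => by positivity) (fun k => norm_nonneg _)))
    exact renewal_norm_mul_le _ _
  have hUF : HasSum (fun p : ℕ × ℕ => u p.1 * f p.2) (U * F) := by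
    have h1 : (∑' p : ℕ × ℕ, u p.1 * f p.2) = U * F := by
      rw [Summable.tsum_prod' hprod (fun a => hfs.mul_left (u a))]
      have : ∀ a : ℕ, (∑' b : ℕ, u a * f b) = u a * F :=
        fun a => Summable.tsum_mul_left (u a) hfs
      rw [tsum_congr this]
      exact Summable.tsum_mul_right F hus
    exact h1 ▸ hprod.hasSum
  -- partial sums over the triangle tend to U * F
  set T : ℕ → Finset (ℕ × ℕ) :=
    fun N => (Finset.range N ×ˢ Finset.range N).filter (fun p => p.1 + p.2 < N) with hT
  have hTmono : Monotone T := by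
    intro a b hab
    intro p hp
    simp only [hT, Finset.mem_filter, Finset.mem_product, Finset.mem_range] at hp ⊢
    omega
  have hTtop : Tendsto T atTop atTop := by
    refine tendsto_atTop_finset_of_monotone hTmono fun p => ⟨p.1 + p.2 + 1, ?_⟩
    simp only [hT, Finset.mem_filter, Finset.mem_product, Finset.mem_range]
    omega
  have hCsum : Tendsto
      (fun N => ∑ m ∈ Finset.range N, ∑ k ∈ Finset.range (m + 1), u (m - k) * f k)
      atTop (𝓝 (U * F)) := by
    have := hUF.comp hTtop
    refine this.congr fun N => ?_
    exact (renewal_triangle_sum (fun a b => u a * f b) N).symm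
  -- split the hypothesis
  have hsplit : ∀ m : ℕ,
      (∑ k ∈ Finset.range (m + 1), u (m - k) * f k)
        + Ω * (∑ k ∈ Finset.range (m + 1), f k) = π := by
    intro m
    rw [← hconv m, Finset.mul_sum, ← Finset.sum_add_distrib]
    exact Finset.sum_congr rfl fun k _ => (add_mul _ _ _).symm
  -- the convolution term tends to 0
  have hc0 : Tendsto (fun m => ∑ k ∈ Finset.range (m + 1), u (m - k) * f k)
      atTop (𝓝 0) := by
    have h1 : Tendsto
        (fun m => ∑ n ∈ Finset.range (m + 1), ∑ k ∈ Finset.range (n + 1), u (n - k) * f k)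
        atTop (𝓝 (U * F)) := hCsum.comp (tendsto_add_atTop_nat 1)
    have h2 := h1.sub hCsum
    rw [sub_self] at h2
    refine h2.congr fun m => ?_
    rw [Finset.sum_range_succ]
    abel
  -- partial sums of f tend to F
  have hPF : Tendsto (fun N => ∑ k ∈ Finset.range N, f k) atTop (𝓝 F) :=
    hfs.hasSum.tendsto_sum_nat
  have hΩPF : Tendsto (fun m => Ω * ∑ k ∈ Finset.range (m + 1), f k) atTop (𝓝 (Ω * F)) :=
    (hPF.comp (tendsto_add_atTop_nat 1)).const_mul Ω
  -- Part 1
  have hpart1 : π = Ω * F := by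
    have htend : Tendsto (fun m : ℕ => π) atTop (𝓝 (0 + Ω * F)) := by
      refine (hc0.add hΩPF).congr fun m => hsplit m
    have := tendsto_nhds_unique htend tendsto_const_nhds
    rw [zero_add] at this
    exact this.symm
  refine ⟨hpart1, ?_⟩
  -- Part 2: key identity for partial sums
  have hkey : ∀ N : ℕ,
      (∑ m ∈ Finset.range N, ∑ k ∈ Finset.range (m + 1), u (m - k) * f k)
        - Ω * (∑ k ∈ Finset.range N, (k : ℂ) • f k)
        = Ω * ((N : ℂ) • (F - ∑ k ∈ Finset.range N, f k)) := by
    intro N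
    have hsum : (∑ m ∈ Finset.range N, ∑ k ∈ Finset.range (m + 1), u (m - k) * f k)
        + Ω * (∑ m ∈ Finset.range N, ∑ k ∈ Finset.range (m + 1), f k)
        = (N : ℂ) • π := by
      have := Finset.sum_congr rfl (fun m (_ : m ∈ Finset.range N) => hsplit m)
      rw [Finset.sum_add_distrib, ← Finset.mul_sum] at this
      rw [this, Finset.sum_const, Finset.card_range, ← Nat.cast_smul_eq_nsmul ℂ]
    rw [renewal_double_sum f N] at hsum
    have hexp : Ω * ((N : ℂ) • (∑ k ∈ Finset.range N, f k)
        - ∑ k ∈ Finset.range N, (k : ℂ) • f k)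
        = (N : ℂ) • (Ω * ∑ k ∈ Finset.range N, f k)
          - Ω * ∑ k ∈ Finset.range N, (k : ℂ) • f k := by
      rw [mul_sub, mul_smul_comm]
    rw [hexp] at hsum
    rw [hpart1] at hsum
    rw [mul_smul_comm, mul_sub, smul_sub]
    -- hsum : A + ((N:ℂ) • (Ω*P) - Ω*Q) = (N:ℂ) • (Ω*F)
    rw [← hsum]
    abel
  -- the right-hand side tends to 0
  have htail : Tendsto (fun N : ℕ => (N : ℂ) • (F - ∑ k ∈ Finset.range N, f k))
      atTop (𝓝 0) := by
    have hbound : ∀ N : ℕ,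
        ‖(N : ℂ) • (F - ∑ k ∈ Finset.range N, f k)‖
          ≤ ∑' k : ℕ, ((↑(k + N) : ℝ) + 1) * ‖f (k + N)‖ := by
      intro N
      have hshift : Summable fun k : ℕ => ‖f (k + N)‖ :=
        (summable_nat_add_iff N).2 hfn
      have hshift2 : Summable fun k : ℕ => ((↑(k + N) : ℝ) + 1) * ‖f (k + N)‖ :=
        (summable_nat_add_iff (f := fun k : ℕ => ((k : ℝ) + 1) * ‖f k‖) N).2 hf
      have htails : F - ∑ k ∈ Finset.range N, f k = ∑' k : ℕ, f (k + N) := by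
        have := Summable.sum_add_tsum_nat_add N hfs
        rw [hF, ← this]; abel
      rw [htails, norm_smul, Complex.norm_natCast]
      calc (N : ℝ) * ‖∑' k : ℕ, f (k + N)‖
          ≤ (N : ℝ) * ∑' k : ℕ, ‖f (k + N)‖ := by
            exact mul_le_mul_of_nonneg_left (norm_tsum_le_tsum_norm hshift)
              (Nat.cast_nonneg N)
        _ = ∑' k : ℕ, (N : ℝ) * ‖f (k + N)‖ := (tsum_mul_left).symm
        _ ≤ ∑' k : ℕ, ((↑(k + N) : ℝ) + 1) * ‖f (k + N)‖ := by
            refine Summable.tsum_le_tsum (fun k => ?_) (hshift.mul_left _) hshift2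
            have : (N : ℝ) ≤ (↑(k + N) : ℝ) + 1 := by push_cast; linarith [Nat.cast_nonneg (α := ℝ) k]
            exact mul_le_mul_of_nonneg_right this (norm_nonneg _)
    refine squeeze_zero_norm hbound ?_
    exact tendsto_sum_nat_add (f := fun k : ℕ => ((k : ℝ) + 1) * ‖f k‖)
  -- take limits in the key identity
  have hQ : Tendsto (fun N => Ω * ∑ k ∈ Finset.range N, (k : ℂ) • f k)
      atTop (𝓝 (Ω * G)) :=
    (hgs.hasSum.tendsto_sum_nat).const_mul Ω
  have hlhs : Tendsto
      (fun N => (∑ m ∈ Finset.range N, ∑ k ∈ Finset.range (m + 1), u (m - k) * f k)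
        - Ω * (∑ k ∈ Finset.range N, (k : ℂ) • f k)) atTop (𝓝 (U * F - Ω * G)) :=
    hCsum.sub hQ
  have hrhs : Tendsto
      (fun N : ℕ => Ω * ((N : ℂ) • (F - ∑ k ∈ Finset.range N, f k))) atTop (𝓝 (Ω * 0)) :=
    htail.const_mul Ω
  rw [mul_zero] at hrhs
  have := tendsto_nhds_unique (hlhs.congr fun N => hkey N) hrhs
  have h0 : U * F - Ω * G = 0 := this
  have := sub_eq_zero.mp h0
  exact this.symm
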